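/- Suppose ψ(ā, t) = ∫ exp(−H₀(t)·exp(θᵀā + z)) φ_{σ²}(z) dz with H₀ nonnegative and nondecreasing, σ² > 0, and H₀ not identically zero with H₀(t) → ∞. Then for each t with 0 < H₀(t) < ∞, ā ↦ ψ(ā, t) is constant in ā if and only if θ = 0 (assuming ā ranges over all of ℝ^T). -/
import Mathlib


open MeasureTheory ProbabilityTheory
open scoped NNReal

lemma stmt16_int (H u : ℝ) (σ2 : ℝ≥0) (hH : 0 ≤ H) :
    Integrable (fun z => Real.exp (-H * Real.exp (u + z))) (gaussianReal 0 σ2) := by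
  refine Integrable.mono' (integrable_const 1)
    ((Real.continuous_exp.comp (by continuity)).aestronglyMeasurable) (ae_of_all _ ?_)
  intro z
  rw [Real.norm_eq_abs, abs_of_pos (Real.exp_pos _)]
  have := Real.exp_pos (u + z)
  exact Real.exp_le_one_iff.mpr (by nlinarith)

lemma stmt16_anti (H : ℝ) (hH : 0 < H) (σ2 : ℝ≥0) :
    StrictAnti (fun u => ∫ z, Real.exp (-H * Real.exp (u + z)) ∂gaussianReal 0 σ2) := by
  intro u v huv
  have hfu := stmt16_int H u σ2 hH.le
  have hfv := stmt16_int H v σ2 hH.le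
  have hpos : 0 < ∫ z, (Real.exp (-H * Real.exp (u + z)) - Real.exp (-H * Real.exp (v + z)))
      ∂gaussianReal 0 σ2 := by
    have hgt : ∀ z : ℝ, 0 < Real.exp (-H * Real.exp (u + z)) - Real.exp (-H * Real.exp (v + z)) := by
      intro z
      have h1 : Real.exp (u + z) < Real.exp (v + z) := Real.exp_lt_exp.mpr (by linarith)
      have : -H * Real.exp (v + z) < -H * Real.exp (u + z) := by nlinarith
      have := Real.exp_lt_exp.mpr this
      linarith
    rw [integral_pos_iff_support_of_nonneg (fun z => (hgt z).le) (hfu.sub hfv)]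
    have : Function.support (fun z => Real.exp (-H * Real.exp (u + z)) -
        Real.exp (-H * Real.exp (v + z))) = Set.univ := by
      ext z
      simp only [Function.mem_support, Set.mem_univ, iff_true]
      intro h
      have := hgt z
      linarith
    rw [this]
    simp
  rw [integral_sub hfu hfv] at hpos
  linarith

/-- for the Gaussian-frailty Cox marginal survival curve
ψ(ā,t) = ∫ exp(−H₀(t)exp(θᵀā + z)) dN(0,σ²)(z), with H₀ nonnegative, nondecreasing,
tending to ∞, and σ² > 0, for each t with 0 < H₀(t) (< ∞ automatic for real-valued
H₀), the map ā ↦ ψ(ā,t) over all of ℝ^T is constant iff θ = 0. -/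
theorem stmt16 {T : ℕ} (θ : Fin T → ℝ) (H0 : ℝ → ℝ)
    (hH0nonneg : ∀ t, 0 ≤ H0 t) (hH0mono : Monotone H0)
    (htend : Filter.Tendsto H0 Filter.atTop Filter.atTop)
    (σ2 : ℝ≥0) (hσ2 : 0 < σ2)
    (ψ : (Fin T → ℝ) → ℝ → ℝ)
    (hψ : ψ = fun a t =>
      ∫ z, Real.exp (-(H0 t) * Real.exp (∑ s, θ s * a s + z)) ∂gaussianReal 0 σ2) :
    ∀ t, 0 < H0 t → ((∀ a b : Fin T → ℝ, ψ a t = ψ b t) ↔ θ = 0) := by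
  intro t ht
  subst hψ
  constructor
  · intro hconst
    by_contra hθ
    have hs : ∃ s, θ s ≠ 0 := by
      by_contra h
      push_neg at h
      exact hθ (funext h)
    obtain ⟨s₀, hs₀⟩ := hs
    have hc : 0 < ∑ s, θ s * θ s := by
      apply Finset.sum_pos' (fun s _ => mul_self_nonneg _)
      exact ⟨s₀, Finset.mem_univ _, mul_self_pos.mpr hs₀⟩
    have h0 : (∑ s, θ s * (0 : Fin T → ℝ) s) = 0 := by simp
    have heq := hconst 0 θ
    simp only [h0] at heq
    have := stmt16_anti (H0 t) ht σ2 (show (0:ℝ) < ∑ s, θ s * θ s from hc)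
    simp only at this
    rw [heq] at this
    exact lt_irrefl _ this
  · intro hθ a b
    subst hθ
    simp
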